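/- Let N be a positive integer, e a positive divisor of N, and δ = [[a,b],[c,d]] ∈ Γ₀(N) with a ≡ d (mod gcd(e, N/e)). Then for every integer n there exists an integer n' such that U_e · T^n · δ · T^{−n'} · U_e^{−1} belongs to Γ₀(N). -/

import Mathlib

open Matrix CongruenceSubgroup
open scoped MatrixGroups

/-- The matrix `U_e = [[1,0],[e,1]]` in `SL(2, ℤ)`. -/
def Ue (e : ℤ) : SL(2, ℤ) :=
  ⟨!![1, 0; e, 1], by norm_num [Matrix.det_fin_two_of]⟩

lemma Ue_inv (e : ℤ) : (Ue e)⁻¹ = Ue (-e) := by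
  rw [inv_eq_iff_mul_eq_one]
  ext i j
  fin_cases i <;> fin_cases j <;> rw [Matrix.SpecialLinearGroup.coe_mul] <;>
    simp [Ue, Matrix.mul_apply, Fin.sum_univ_two]

/-- Solvability of a linear congruence. -/
lemma lin_cong (k m t : ℤ) (h : (Int.gcd k m : ℤ) ∣ t) : ∃ x : ℤ, m ∣ (k * x - t) := by
  obtain ⟨s, hs⟩ := h
  refine ⟨Int.gcdA k m * s, ⟨-(Int.gcdB k m) * s, ?_⟩⟩
  have hbz := Int.gcd_eq_gcd_ab k m
  subst hs
  linear_combination -s * hbz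

/-- Let `N` be a positive integer, `e` a positive divisor of `N`, and `δ = [[a,b],[c,d]] ∈ Γ₀(N)`
with `a ≡ d (mod gcd(e, N/e))`.  Then for every integer `n` there is an integer `n'` such that
`U_e T^n δ T^{-n'} U_e⁻¹ ∈ Γ₀(N)`. -/
theorem stmt_5 (N : ℕ) (hN : 0 < N) (e : ℕ) (he : 0 < e) (heN : e ∣ N)
    (δ : SL(2, ℤ)) (hδ : δ ∈ Gamma0 N)
    (had : ((δ : Matrix (Fin 2) (Fin 2) ℤ) 0 0)
      ≡ ((δ : Matrix (Fin 2) (Fin 2) ℤ) 1 1) [ZMOD (Nat.gcd e (N / e))]) :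
    ∀ n : ℤ, ∃ n' : ℤ,
      Ue (e : ℤ) * ModularGroup.T ^ n * δ * ModularGroup.T ^ (-n') * (Ue (e : ℤ))⁻¹
        ∈ Gamma0 N := by
  intro n
  set a : ℤ := (δ : Matrix (Fin 2) (Fin 2) ℤ) 0 0 with ha
  set b : ℤ := (δ : Matrix (Fin 2) (Fin 2) ℤ) 0 1 with hb
  set c : ℤ := (δ : Matrix (Fin 2) (Fin 2) ℤ) 1 0 with hc
  set d : ℤ := (δ : Matrix (Fin 2) (Fin 2) ℤ) 1 1 with hd
  obtain ⟨M, hM⟩ := heN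
  have hMdiv : (N : ℤ) / e = M := by
    rw [hM]; push_cast; exact Int.mul_ediv_cancel_left _ (by exact_mod_cast he.ne')
  have hNe : (N : ℤ) = e * M := by exact_mod_cast hM
  -- c is divisible by N
  have hc0 : (N : ℤ) ∣ c := by
    have := Gamma0_mem.mp hδ
    exact (ZMod.intCast_zmod_eq_zero_iff_dvd _ _).mp this
  -- determinant
  have hdet : a * d - b * c = 1 := by
    have := δ.2
    rw [Matrix.det_fin_two] at this
    exact this
  -- gcd divides t
  set t : ℤ := e * (b + n * d) + (d - a) with ht
  have hgN : N / e = M := by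
    rw [hM]; exact Nat.mul_div_cancel_left M he
  have hgdvd : ((Nat.gcd e M : ℕ) : ℤ) ∣ t := by
    refine dvd_add (Dvd.dvd.mul_right ?_ _) ?_
    · exact_mod_cast Int.natCast_dvd_natCast.mpr (Nat.gcd_dvd_left e M)
    · have := had.dvd
      rw [hgN] at had
      exact had.dvd
  -- gcd (e*a) M = gcd e M since a coprime to M
  have hacop : IsCoprime a (M : ℤ) := by
    obtain ⟨k, hk⟩ := hc0
    exact ⟨d, -(e * k) * b, by linear_combination hdet + b * hk + b * k * hNe⟩
  have hgcd : (Int.gcd ((e : ℤ) * a) (M : ℤ) : ℤ) ∣ t := by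
    set g : ℕ := Int.gcd ((e : ℤ) * a) (M : ℤ) with hg
    have hgM : (g : ℤ) ∣ (M : ℤ) := Int.gcd_dvd_right _ _
    have hcop : IsCoprime ((g : ℤ)) a := (hacop.of_isCoprime_of_dvd_right hgM).symm
    have hge : (g : ℤ) ∣ (e : ℤ) :=
      hcop.dvd_of_dvd_mul_right (Int.gcd_dvd_left _ _)
    have h1 : g ∣ Nat.gcd e M :=
      Nat.dvd_gcd (Int.natCast_dvd_natCast.mp hge) (Int.natCast_dvd_natCast.mp hgM)
    exact dvd_trans (Int.natCast_dvd_natCast.mpr h1) hgdvd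
  obtain ⟨m, hm⟩ := lin_cong ((e : ℤ) * a) M t hgcd
  refine ⟨m, ?_⟩
  rw [Ue_inv, Gamma0_mem]
  rw [show ((Ue (e : ℤ) * ModularGroup.T ^ n * δ * ModularGroup.T ^ (-m) * Ue (-(e:ℤ)) :
      SL(2,ℤ)) : Matrix (Fin 2) (Fin 2) ℤ) 1 0
    = (e : ℤ) * ((e : ℤ) * a * m - t) + c * (1 + e * n + e^2 * n * m + e * m) by
      simp only [Matrix.SpecialLinearGroup.coe_mul]
      simp only [Matrix.SpecialLinearGroup.coe_mul, Ue, ModularGroup.coe_T_zpow,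
        Matrix.mul_apply, Fin.sum_univ_two]
      simp [← ha, ← hb, ← hc, ← hd]
      ring]
  rw [ZMod.intCast_zmod_eq_zero_iff_dvd]
  refine dvd_add ?_ (hc0.mul_right _)
  obtain ⟨k, hk⟩ := hm
  exact ⟨k, by rw [hk]; push_cast [hNe]; ring⟩
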